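/- (Classical limit of the Pieri coefficients.) Let η be a composition, I = {t_1 < ⋯ < t_s} a subset maximal with respect to η, and α > 0 a real number. For real q ∈ (0,1) put t := q^{1/α} and define the real number a_{η,c_I(η)}(q) := −(q−1) d'_η(q^{−1},t^{−1}) A_I(η̄(q)) B̃_I(η̄(q)) / (q^{η_{t_1}+1} (t−1) d'_{c_I(η)}(q^{−1},t^{−1})), where η̄(q)_i := q^{η_i} t^{−l'_η(i)}. Let u_i := η_i − l'_η(i)/α, a(x,y) := 1/(α(x−y)), b(x,y) := (x−y−1/α)/(x−y), A_{α,I}(u) := a(u_{t_s}−1, u_{t_1}) ∏_{v=1}^{s−1} a(u_{t_v}, u_{t_{v+1}}), B̃_{α,I}(u) := (u_{t_1}+1+(n−1)/α) ∏_{v=1}^{s} ∏_{j=t_{v−1}+1}^{t_v−1} b(u_{t_v}, u_j) ∏_{j=t_s+1}^{n} b(u_{t_1}+1, u_j) (with t_0 := 0), and d'_{α,μ} := ∏_{s' ∈ diag(μ)} (α(a_μ(s')+1) + l_μ(s')). Then lim_{q→1⁻} a_{η,c_I(η)}(q) = −α² d'_{α,η} A_{α,I}(u) B̃_{α,I}(u)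 / d'_{α,c_I(η)}. -/

import Mathlib

open scoped BigOperators Classical

noncomputable section

/-- A composition with (at most) `n` parts: nonzero entries only in positions `1,…,n`. -/
def IsComp (n : ℕ) (η : ℕ → ℕ) : Prop := ∀ j, η j ≠ 0 → j ∈ Finset.Icc 1 n

/-- `l'_η(i) = #{j<i : η_j ≥ η_i} + #{j>i : η_j > η_i}`. -/
def lprime (n : ℕ) (η : ℕ → ℕ) (i : ℕ) : ℕ :=
  ((Finset.Icc 1 n).filter fun j => j < i ∧ η i ≤ η j).card +
  ((Finset.Icc 1 n).filter fun j => i < j ∧ η i < η j).card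

/-- The least element `t_1` of a finite set `I`. -/
def fmin (I : Finset ℕ) : ℕ := if h : I.Nonempty then I.min' h else 0

/-- The greatest element `t_s` of a finite set `I`. -/
def fmax (I : Finset ℕ) : ℕ := if h : I.Nonempty then I.max' h else 0

/-- The least element of `I` greater than `j`. -/
def succI (I : Finset ℕ) (j : ℕ) : ℕ := fmin (I.filter (fun k => j < k))

/-- `I` is maximal with respect to `η`. -/
def MaximalI (n : ℕ) (I : Finset ℕ) (η : ℕ → ℕ) : Prop :=
  (∀ j ∈ Finset.Icc 1 n, j ∉ I → j < fmax I → η j ≠ η (succI I j)) ∧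
  (∀ j ∈ Finset.Icc 1 n, fmax I < j → η j ≠ η (fmin I) + 1)

/-- The composition `c_I(η)`. -/
def cIfun (I : Finset ℕ) (η : ℕ → ℕ) : ℕ → ℕ := fun j =>
  if j = fmax I then η (fmin I) + 1
  else if j ∈ I then η (succI I j)
  else η j

/-- The arm length `a_η(i,j) = η_i - j`. -/
def armF (η : ℕ → ℕ) (i j : ℕ) : ℕ := η i - j

/-- The leg length `l_η(i,j)`. -/
def legF (n : ℕ) (η : ℕ → ℕ) (i j : ℕ) : ℕ :=
  ((Finset.Icc 1 n).filter fun k => i < k ∧ j ≤ η k ∧ η k ≤ η i).card +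
  ((Finset.Icc 1 n).filter fun k => k < i ∧ j ≤ η k + 1 ∧ η k + 1 ≤ η i).card

/-- The real spectral vector `η̄(q)` for parameters `qr, tr`: `η̄_i = qr^{η_i} tr^{-l'_η(i)}`. -/
def specR (qr tr : ℝ) (n : ℕ) (η : ℕ → ℕ) : ℕ → ℝ := fun i =>
  qr ^ (η i) * tr ^ (-(lprime n η i : ℤ))

/-- `â(x,y) = (t-1)x/(x-y)` over `ℝ`. -/
def ahatR (tr x y : ℝ) : ℝ := (tr - 1) * x / (x - y)

/-- `b̂(x,y) = (x-ty)/(x-y)` over `ℝ`. -/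
def bhatR (tr x y : ℝ) : ℝ := (x - tr * y) / (x - y)

/-- `A_I(z)` over `ℝ`. -/
def AIR (qr tr : ℝ) (I : Finset ℕ) (z : ℕ → ℝ) : ℝ :=
  ahatR tr (z (fmax I) / qr) (z (fmin I)) *
    (((I.sort (· ≤ ·)).zip (I.sort (· ≤ ·)).tail).map (fun p => ahatR tr (z p.1) (z p.2))).prod

/-- `B̃_I(z)` over `ℝ`. -/
def BtildeIR (qr tr : ℝ) (n : ℕ) (I : Finset ℕ) (z : ℕ → ℝ) : ℝ :=
  (qr * z (fmin I) - tr ^ (1 - (n:ℤ))) *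
    (∏ j ∈ (Finset.Icc 1 n).filter (fun j => j ∉ I ∧ j < fmax I), bhatR tr (z (succI I j)) (z j)) *
    (∏ j ∈ (Finset.Icc 1 n).filter (fun j => fmax I < j), bhatR tr (qr * z (fmin I)) (z j))

/-- `d'_η(q⁻¹,t⁻¹)` over `ℝ`. -/
def dprimeInvR (qr tr : ℝ) (n : ℕ) (η : ℕ → ℕ) : ℝ :=
  ∏ i ∈ Finset.Icc 1 n, ∏ j ∈ Finset.Icc 1 (η i),
    (1 - qr ^ (-(armF η i j + 1 : ℤ)) * tr ^ (-(legF n η i j : ℤ)))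

/-- The vector `u_i = η_i - l'_η(i)/α` of the Jack theory. -/
def uvec (α : ℝ) (n : ℕ) (η : ℕ → ℕ) : ℕ → ℝ := fun i =>
  (η i : ℝ) - (lprime n η i : ℝ) / α

/-- `a(x,y) = 1/(α(x-y))`. -/
def aJ (α x y : ℝ) : ℝ := 1 / (α * (x - y))

/-- `b(x,y) = (x-y-1/α)/(x-y)`. -/
def bJ (α x y : ℝ) : ℝ := (x - y - 1/α) / (x - y)

/-- `A_{α,I}(u) = a(u_{t_s}-1, u_{t_1}) ∏_{v=1}^{s-1} a(u_{t_v}, u_{t_{v+1}})`. -/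
def AJ (α : ℝ) (I : Finset ℕ) (u : ℕ → ℝ) : ℝ :=
  aJ α (u (fmax I) - 1) (u (fmin I)) *
    (((I.sort (· ≤ ·)).zip (I.sort (· ≤ ·)).tail).map (fun p => aJ α (u p.1) (u p.2))).prod

/-- `B̃_{α,I}(u)`. -/
def BtJ (α : ℝ) (n : ℕ) (I : Finset ℕ) (u : ℕ → ℝ) : ℝ :=
  (u (fmin I) + 1 + ((n : ℝ) - 1) / α) *
    (∏ j ∈ (Finset.Icc 1 n).filter (fun j => j ∉ I ∧ j < fmax I), bJ α (u (succI I j)) (u j)) *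
    (∏ j ∈ (Finset.Icc 1 n).filter (fun j => fmax I < j), bJ α (u (fmin I) + 1) (u j))

/-- `d'_{α,μ} = ∏_{s ∈ diag(μ)} (α(a_μ(s)+1) + l_μ(s))`. -/
def dJ (α : ℝ) (n : ℕ) (μ : ℕ → ℕ) : ℝ :=
  ∏ i ∈ Finset.Icc 1 n, ∏ j ∈ Finset.Icc 1 (μ i),
    (α * (armF μ i j + 1) + legF n μ i j)

open Filter Set Finset

local notation "F" => nhdsWithin (1:ℝ) (Set.Ioo 0 1)

lemma mem_ev : ∀ᶠ q in F, q ∈ Set.Ioo (0:ℝ) 1 := self_mem_nhdsWithin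

lemma base_tendsto (c : ℝ) :
    Filter.Tendsto (fun q : ℝ => (q ^ c - 1)/(q - 1)) F (nhds c) := by
  have hd : HasDerivAt (fun x : ℝ => x ^ c) (c * (1:ℝ) ^ (c - 1)) 1 :=
    Real.hasDerivAt_rpow_const (Or.inl one_ne_zero)
  rw [Real.one_rpow, mul_one] at hd
  have h := hasDerivAt_iff_tendsto_slope.mp hd
  have h2 : Filter.Tendsto (slope (fun x : ℝ => x ^ c) 1) F (nhds c) :=
    h.mono_left (nhdsWithin_mono 1 (fun x hx => (ne_of_lt hx.2 : x ≠ 1)))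
  refine h2.congr (fun q => ?_)
  rw [slope_def_field, Real.one_rpow]

lemma lem_M (a b : ℝ) :
    Filter.Tendsto (fun q : ℝ => (q ^ a - q ^ b)/(q - 1)) F (nhds (a - b)) := by
  have h := (base_tendsto a).sub (base_tendsto b)
  refine h.congr (fun q => ?_)
  rw [div_sub_div_same]; ring_nf

lemma pow_cont (a : ℝ) : Filter.Tendsto (fun q : ℝ => q ^ a) F (nhds 1) := by
  have : ContinuousAt (fun q : ℝ => q ^ a) 1 :=
    Real.continuousAt_rpow_const 1 a (Or.inl one_ne_zero)
  simpa [Real.one_rpow] using this.tendsto.mono_left nhdsWithin_le_nhds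

lemma fac_tendsto (c : ℝ) :
    Filter.Tendsto (fun q : ℝ => (1 - q ^ (-c))/(q - 1)) F (nhds c) := by
  have h := (base_tendsto (-c)).neg
  rw [neg_neg] at h
  refine h.congr (fun q => ?_)
  rw [← neg_div, neg_sub]

lemma list_prod_tendsto {ι : Type*} (L : List ι) (f : ι → ℝ → ℝ) (g : ι → ℝ)
    (h : ∀ p ∈ L, Filter.Tendsto (f p) F (nhds (g p))) :
    Filter.Tendsto (fun q => (L.map (fun p => f p q)).prod) F (nhds ((L.map g).prod)) := by
  induction L with
  | nil => simp only [List.map_nil, List.prod_nil]; exact tendsto_const_nhds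
  | cons a t ih =>
    simp only [List.map_cons, List.prod_cons]
    exact (h a List.mem_cons_self).mul (ih (fun p hp => h p (List.mem_cons_of_mem a hp)))

lemma div_div_div' (A B c : ℝ) (hc : c ≠ 0) : (A/c)/(B/c) = A/B := by
  rw [div_div_eq_mul_div, div_mul_cancel₀ _ hc]

lemma key_alg (x D A B P T Dc : ℝ) (hx : x ≠ 0) (N : ℕ) :
    -(x * D * A * B) / (P * T * Dc)
      = -((D/x^N) * A * (B/x)) / (P * (T/x) * (Dc/x^(N+1))) := by
  obtain ⟨D', rfl⟩ : ∃ D', D = x^N * D' := ⟨D/x^N, by rw [mul_comm, div_mul_cancel₀ _ (pow_ne_zero _ hx)]⟩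
  obtain ⟨B', rfl⟩ : ∃ B', B = x * B' := ⟨B/x, by rw [mul_comm, div_mul_cancel₀ _ hx]⟩
  obtain ⟨T', rfl⟩ : ∃ T', T = x * T' := ⟨T/x, by rw [mul_comm, div_mul_cancel₀ _ hx]⟩
  obtain ⟨Dc', rfl⟩ : ∃ Dc', Dc = x^(N+1) * Dc' :=
    ⟨Dc/x^(N+1), by rw [mul_comm, div_mul_cancel₀ _ (pow_ne_zero _ hx)]⟩
  rw [mul_div_cancel_left₀ _ (pow_ne_zero _ hx), mul_div_cancel_left₀ _ hx,
    mul_div_cancel_left₀ _ hx, mul_div_cancel_left₀ _ (pow_ne_zero (N+1) hx)]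
  rw [show -(x * (x^N * D') * A * (x * B')) = x^(N+2) * (-(D' * A * B')) by ring,
    show P * (x * T') * (x^(N+1) * Dc') = x^(N+2) * (P * T' * Dc') by ring,
    mul_div_mul_left _ _ (pow_ne_zero _ hx)]

section Conv
variable {α : ℝ} {q : ℝ}

lemma spec_eq (hq : 0 < q) (n : ℕ) (η : ℕ → ℕ) (i : ℕ) :
    specR q (q ^ (1/α)) n η i = q ^ (uvec α n η i) := by
  rw [specR, uvec, ← Real.rpow_natCast q (η i), ← Real.rpow_intCast (q ^ (1/α)) _,
    ← Real.rpow_mul hq.le, ← Real.rpow_add hq]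
  congr 1
  push_cast
  ring

lemma dfac_eq (hq : 0 < q) (a l : ℕ) :
    q ^ (-(a + 1 : ℤ)) * (q ^ (1/α)) ^ (-(l : ℤ))
      = q ^ (-((a : ℝ) + 1 + (l : ℝ)/α)) := by
  rw [← Real.rpow_intCast q _, ← Real.rpow_intCast (q ^ (1/α)) _,
    ← Real.rpow_mul hq.le, ← Real.rpow_add hq]
  congr 1
  push_cast
  ring

lemma tpow_eq (hq : 0 < q) (n : ℕ) :
    (q ^ (1/α)) ^ (1 - (n : ℤ)) = q ^ ((1/α) * (1 - (n : ℝ))) := by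
  rw [← Real.rpow_intCast (q ^ (1/α)) _, ← Real.rpow_mul hq.le]
  congr 1
  push_cast
  ring

end Conv

section AB
variable {α : ℝ} (hα : 0 < α)

lemma ahat_tendsto (x y : ℝ) (hxy : x ≠ y) :
    Filter.Tendsto (fun q : ℝ => ahatR (q ^ (1/α)) (q ^ x) (q ^ y)) F (nhds (aJ α x y)) := by
  have h : Filter.Tendsto
      (fun q : ℝ => ((q ^ (1/α) - 1)/(q - 1) * q ^ x) / ((q ^ x - q ^ y)/(q - 1))) F
      (nhds ((1/α * 1) / (x - y))) :=
    (((base_tendsto (1/α)).mul (pow_cont x)).div (lem_M x y) (sub_ne_zero.mpr hxy))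
  rw [show (1/α * 1) / (x - y) = aJ α x y by rw [aJ, mul_one, div_div]] at h
  refine h.congr' ?_
  filter_upwards [mem_ev] with q hq
  have hx1 : q - 1 ≠ 0 := sub_ne_zero.mpr (ne_of_lt hq.2)
  rw [div_mul_eq_mul_div, div_div_div' _ _ _ hx1, ahatR]

lemma bhat_tendsto (x y : ℝ) (hxy : x ≠ y) :
    Filter.Tendsto (fun q : ℝ => bhatR (q ^ (1/α)) (q ^ x) (q ^ y)) F (nhds (bJ α x y)) := by
  have h : Filter.Tendsto
      (fun q : ℝ => ((q ^ x - q ^ (y + 1/α))/(q - 1)) / ((q ^ x - q ^ y)/(q - 1))) F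
      (nhds ((x - (y + 1/α)) / (x - y))) :=
    ((lem_M x (y + 1/α)).div (lem_M x y) (sub_ne_zero.mpr hxy))
  rw [show (x - (y + 1/α)) / (x - y) = bJ α x y by rw [bJ]; ring_nf] at h
  refine h.congr' ?_
  filter_upwards [mem_ev] with q hq
  have hx1 : q - 1 ≠ 0 := sub_ne_zero.mpr (ne_of_lt hq.2)
  rw [div_div_div' _ _ _ hx1, bhatR]
  congr 2
  rw [Real.rpow_add hq.1, mul_comm]

end AB

section Comb
variable (n : ℕ) (η : ℕ → ℕ)

def FiS (i : ℕ) : Finset ℕ :=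
  (Finset.Icc 1 n).filter (fun k => (k < i ∧ η i ≤ η k) ∨ (i < k ∧ η i < η k))

lemma lprime_card (i : ℕ) : lprime n η i = (FiS n η i).card := by
  rw [lprime, FiS, Finset.filter_or, Finset.card_union_of_disjoint]
  rw [Finset.disjoint_left]
  intro k h1 h2
  simp only [Finset.mem_filter] at h1 h2
  omega

variable {n η}

lemma lp_lt_of_eq {i j : ℕ} (hi : i ∈ Finset.Icc 1 n) (hj : j ∈ Finset.Icc 1 n)
    (hij : i < j) (h : η i = η j) : lprime n η i < lprime n η j := by
  rw [lprime_card, lprime_card]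
  apply Finset.card_lt_card
  rw [Finset.ssubset_iff_of_subset]
  · exact ⟨i, by simp only [FiS, Finset.mem_filter]; exact ⟨hi, Or.inl ⟨hij, h.ge⟩⟩,
      by simp only [FiS, Finset.mem_filter]; omega⟩
  · intro k hk
    simp only [FiS, Finset.mem_filter] at hk ⊢
    obtain ⟨hk1, hk2⟩ := hk
    refine ⟨hk1, ?_⟩
    rcases hk2 with ⟨h1, h2⟩ | ⟨h1, h2⟩
    · exact Or.inl ⟨by omega, by omega⟩
    · rcases lt_trichotomy k j with hkj | rfl | hkj
      · exact Or.inl ⟨hkj, by omega⟩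
      · omega
      · exact Or.inr ⟨hkj, by omega⟩

lemma lp_lt_of_lt {i j : ℕ} (hi : i ∈ Finset.Icc 1 n) (hj : j ∈ Finset.Icc 1 n)
    (hij : i < j) (h : η i < η j) : lprime n η j < lprime n η i := by
  rw [lprime_card, lprime_card]
  apply Finset.card_lt_card
  rw [Finset.ssubset_iff_of_subset]
  · exact ⟨j, by simp only [FiS, Finset.mem_filter]; exact ⟨hj, Or.inr ⟨hij, h⟩⟩,
      by simp only [FiS, Finset.mem_filter]; omega⟩
  · intro k hk
    simp only [FiS, Finset.mem_filter] at hk ⊢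
    obtain ⟨hk1, hk2⟩ := hk
    refine ⟨hk1, ?_⟩
    rcases hk2 with ⟨h1, h2⟩ | ⟨h1, h2⟩
    · rcases lt_trichotomy k i with hki | rfl | hki
      · exact Or.inl ⟨hki, by omega⟩
      · omega
      · exact Or.inr ⟨hki, by omega⟩
    · exact Or.inr ⟨by omega, by omega⟩

lemma lp_le_of_gt {i j : ℕ} (hi : i ∈ Finset.Icc 1 n) (hj : j ∈ Finset.Icc 1 n)
    (hij : i < j) (h : η j < η i) : lprime n η i ≤ lprime n η j := by
  rw [lprime_card, lprime_card]
  apply Finset.card_le_card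
  intro k hk
  simp only [FiS, Finset.mem_filter] at hk ⊢
  obtain ⟨hk1, hk2⟩ := hk
  refine ⟨hk1, ?_⟩
  rcases hk2 with ⟨h1, h2⟩ | ⟨h1, h2⟩
  · exact Or.inl ⟨by omega, by omega⟩
  · rcases lt_trichotomy k j with hkj | rfl | hkj
    · exact Or.inl ⟨hkj, by omega⟩
    · omega
    · exact Or.inr ⟨hkj, by omega⟩

variable {α : ℝ}

lemma uvec_lt_of_ge (hα : 0 < α) {i j : ℕ} (hi : i ∈ Finset.Icc 1 n) (hj : j ∈ Finset.Icc 1 n)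
    (hij : i < j) (h : η j ≤ η i) : uvec α n η j < uvec α n η i := by
  rw [uvec, uvec]
  rcases eq_or_lt_of_le h with heq | hlt
  · have hl := lp_lt_of_eq hi hj hij heq.symm
    have hl' : (lprime n η i : ℝ) < (lprime n η j : ℝ) := by exact_mod_cast hl
    have : (lprime n η i : ℝ)/α < (lprime n η j : ℝ)/α := by gcongr
    have he : (η i : ℝ) = (η j : ℝ) := by exact_mod_cast heq.symm
    linarith
  · have hl := lp_le_of_gt hi hj hij hlt
    have hl' : (lprime n η i : ℝ) ≤ (lprime n η j : ℝ) := by exact_mod_cast hl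
    have : (lprime n η i : ℝ)/α ≤ (lprime n η j : ℝ)/α := by gcongr
    have he : (η j : ℝ) + 1 ≤ (η i : ℝ) := by exact_mod_cast hlt
    linarith

lemma uvec_add_one_lt (hα : 0 < α) {i j : ℕ} (hi : i ∈ Finset.Icc 1 n) (hj : j ∈ Finset.Icc 1 n)
    (hij : i < j) (h : η i < η j) : uvec α n η i + 1 < uvec α n η j := by
  rw [uvec, uvec]
  have hl := lp_lt_of_lt hi hj hij h
  have hl' : (lprime n η j : ℝ) + 1 ≤ (lprime n η i : ℝ) := by exact_mod_cast hl
  have h1 : ((lprime n η j : ℝ) + 1)/α ≤ (lprime n η i : ℝ)/α := by gcongr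
  have h2 : ((lprime n η j : ℝ) + 1)/α = (lprime n η j : ℝ)/α + 1/α := by ring
  have he : (η i : ℝ) + 1 ≤ (η j : ℝ) := by exact_mod_cast h
  have hp : 0 < 1/α := by positivity
  linarith

lemma uvec_ne (hα : 0 < α) {i j : ℕ} (hi : i ∈ Finset.Icc 1 n) (hj : j ∈ Finset.Icc 1 n)
    (hij : i < j) : uvec α n η i ≠ uvec α n η j := by
  rcases le_or_gt (η j) (η i) with h | h
  · exact (uvec_lt_of_ge hα hi hj hij h).ne'
  · exact ne_of_lt (by have := uvec_add_one_lt hα hi hj hij h; linarith)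

lemma uvec_add_one_ne (hα : 0 < α) {i j : ℕ} (hi : i ∈ Finset.Icc 1 n) (hj : j ∈ Finset.Icc 1 n)
    (hij : i < j) : uvec α n η i + 1 ≠ uvec α n η j := by
  rcases le_or_gt (η j) (η i) with h | h
  · exact ne_of_gt (by have := uvec_lt_of_ge hα hi hj hij h; linarith)
  · exact ne_of_lt (uvec_add_one_lt hα hi hj hij h)

end Comb

section SetI
variable {I : Finset ℕ}

lemma fmin_eq (hne : I.Nonempty) : fmin I = I.min' hne := dif_pos hne
lemma fmax_eq (hne : I.Nonempty) : fmax I = I.max' hne := dif_pos hne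
lemma fmin_mem (hne : I.Nonempty) : fmin I ∈ I := by rw [fmin_eq hne]; exact I.min'_mem hne
lemma fmax_mem (hne : I.Nonempty) : fmax I ∈ I := by rw [fmax_eq hne]; exact I.max'_mem hne
lemma fmin_le (hne : I.Nonempty) {j : ℕ} (hj : j ∈ I) : fmin I ≤ j := by rw [fmin_eq hne]; exact I.min'_le j hj
lemma le_fmax (hne : I.Nonempty) {j : ℕ} (hj : j ∈ I) : j ≤ fmax I := by rw [fmax_eq hne]; exact I.le_max' j hj

lemma succI_spec (hne : I.Nonempty) {j : ℕ} (hj : j < fmax I) : succI I j ∈ I ∧ j < succI I j := by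
  have hS : (I.filter (fun k => j < k)).Nonempty :=
    ⟨fmax I, Finset.mem_filter.mpr ⟨fmax_mem hne, hj⟩⟩
  have : succI I j = (I.filter (fun k => j < k)).min' hS := by
    rw [succI, fmin_eq hS]
  rw [this]
  have hm := (I.filter (fun k => j < k)).min'_mem hS
  rw [Finset.mem_filter] at hm
  exact ⟨hm.1, hm.2⟩

lemma succI_le {j k : ℕ} (hk : k ∈ I) (hjk : j < k) : succI I j ≤ k := by
  have hS : (I.filter (fun k' => j < k')).Nonempty := ⟨k, Finset.mem_filter.mpr ⟨hk, hjk⟩⟩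
  rw [succI, fmin_eq hS]
  exact Finset.min'_le _ k (Finset.mem_filter.mpr ⟨hk, hjk⟩)

lemma sum_cIfun (hne : I.Nonempty) (η : ℕ → ℕ) {n : ℕ} (hI : I ⊆ Finset.Icc 1 n) :
    ∑ i ∈ Finset.Icc 1 n, cIfun I η i = (∑ i ∈ Finset.Icc 1 n, η i) + 1 := by
  classical
  set σ : ℕ → ℕ := fun j => if j = fmax I then fmin I else succI I j with hσ
  have hσmem : ∀ j ∈ I, σ j ∈ I := by
    intro j hj
    by_cases h : j = fmax I
    · simp only [hσ, if_pos h]; exact fmin_mem hne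
    · simp only [hσ, if_neg h]
      exact (succI_spec hne (lt_of_le_of_ne (le_fmax hne hj) h)).1
  have hσgt : ∀ j ∈ I, j ≠ fmax I → j < σ j := by
    intro j hj h
    simp only [hσ, if_neg h]
    exact (succI_spec hne (lt_of_le_of_ne (le_fmax hne hj) h)).2
  have hinj : Set.InjOn σ I := by
    intro j1 hj1 j2 hj2 he
    by_cases h1 : j1 = fmax I <;> by_cases h2 : j2 = fmax I
    · rw [h1, h2]
    · exfalso
      have := hσgt j2 hj2 h2
      have hm : σ j1 = fmin I := by simp only [hσ, if_pos h1]
      have : fmin I ≤ j2 := fmin_le hne hj2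
      omega
    · exfalso
      have := hσgt j1 hj1 h1
      have hm : σ j2 = fmin I := by simp only [hσ, if_pos h2]
      have : fmin I ≤ j1 := fmin_le hne hj1
      omega
    · rcases lt_trichotomy j1 j2 with h | h | h
      · exfalso
        have := hσgt j1 hj1 h1
        have h3 : σ j1 ≤ j2 := by simp only [hσ, if_neg h1]; exact succI_le hj2 h
        have := hσgt j2 hj2 h2
        omega
      · exact h
      · exfalso
        have := hσgt j2 hj2 h2
        have h3 : σ j2 ≤ j1 := by simp only [hσ, if_neg h2]; exact succI_le hj1 h
        have := hσgt j1 hj1 h1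
        omega
  have himg : I.image σ = I := by
    apply Finset.eq_of_subset_of_card_le
    · intro k hk
      rw [Finset.mem_image] at hk
      obtain ⟨j, hj, rfl⟩ := hk
      exact hσmem j hj
    · rw [Finset.card_image_of_injOn hinj]
  have hsumI : ∑ j ∈ I, η (σ j) = ∑ j ∈ I, η j := by
    rw [← Finset.sum_image (fun x hx y hy h => hinj hx hy h), himg]
  have hcI : ∀ j ∈ I, cIfun I η j = η (σ j) + (if j = fmax I then 1 else 0) := by
    intro j hj
    by_cases h : j = fmax I
    · simp only [cIfun, hσ, if_pos h]
    · simp only [cIfun, hσ, if_neg h, if_pos hj, add_zero]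
  rw [← Finset.sum_sdiff hI, ← Finset.sum_sdiff hI (f := η)]
  have h1 : ∑ i ∈ Finset.Icc 1 n \ I, cIfun I η i = ∑ i ∈ Finset.Icc 1 n \ I, η i := by
    apply Finset.sum_congr rfl
    intro i hi
    rw [Finset.mem_sdiff] at hi
    have h2 : i ≠ fmax I := fun h => hi.2 (h ▸ fmax_mem hne)
    simp only [cIfun, if_neg h2, if_neg hi.2]
  have h2 : ∑ i ∈ I, cIfun I η i = (∑ i ∈ I, η i) + 1 := by
    rw [Finset.sum_congr rfl hcI, Finset.sum_add_distrib, hsumI, Finset.sum_ite_eq' I (fmax I),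
      if_pos (fmax_mem hne)]
  omega

end SetI

lemma zip_pairs {l : List ℕ} (hl : l.Pairwise (· < ·)) {p : ℕ × ℕ} (hp : p ∈ l.zip l.tail) :
    p.1 ∈ l ∧ p.2 ∈ l ∧ p.1 < p.2 := by
  induction l with
  | nil => simp at hp
  | cons a t ih =>
    cases t with
    | nil => simp at hp
    | cons b t2 =>
      rw [List.tail_cons, List.zip_cons_cons] at hp
      rcases List.mem_cons.mp hp with h | h
      · subst h
        exact ⟨List.mem_cons_self, List.mem_cons_of_mem _ List.mem_cons_self,
          (List.pairwise_cons.mp hl).1 b List.mem_cons_self⟩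
      · have h2 : p ∈ (b :: t2).zip (b :: t2).tail := by rw [List.tail_cons]; exact h
        obtain ⟨m1, m2, hlt⟩ := ih (List.pairwise_cons.mp hl).2 h2
        exact ⟨List.mem_cons_of_mem _ m1, List.mem_cons_of_mem _ m2, hlt⟩

/-- The normalized `d'` limit value. -/
def PaF (α : ℝ) (n : ℕ) (μ : ℕ → ℕ) : ℝ :=
  ∏ i ∈ Finset.Icc 1 n, ∏ j ∈ Finset.Icc 1 (μ i),
    ((armF μ i j : ℝ) + 1 + (legF n μ i j : ℝ)/α)

lemma prod_qsub (q : ℝ) (n : ℕ) (μ : ℕ → ℕ) :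
    ∏ i ∈ Finset.Icc 1 n, ∏ _j ∈ Finset.Icc 1 (μ i), q
      = q ^ (∑ i ∈ Finset.Icc 1 n, μ i) := by
  rw [← Finset.prod_pow_eq_pow_sum]
  apply Finset.prod_congr rfl
  intro i _
  rw [Finset.prod_const, Nat.card_Icc]
  simp

lemma LD (α : ℝ) (n : ℕ) (μ : ℕ → ℕ) :
    Filter.Tendsto
      (fun q : ℝ => dprimeInvR q (q ^ (1/α)) n μ / (q - 1) ^ (∑ i ∈ Finset.Icc 1 n, μ i))
      F (nhds (PaF α n μ)) := by
  have heq : ∀ q : ℝ,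
      dprimeInvR q (q ^ (1/α)) n μ / (q - 1) ^ (∑ i ∈ Finset.Icc 1 n, μ i)
        = ∏ i ∈ Finset.Icc 1 n, ∏ j ∈ Finset.Icc 1 (μ i),
            ((1 - q ^ (-(armF μ i j + 1 : ℤ)) * (q ^ (1/α)) ^ (-(legF n μ i j : ℤ)))/(q - 1)) := by
    intro q
    rw [dprimeInvR, ← prod_qsub (q-1) n μ, ← Finset.prod_div_distrib]
    apply Finset.prod_congr rfl
    intro i _
    rw [← Finset.prod_div_distrib]
  rw [show (fun q : ℝ => dprimeInvR q (q ^ (1/α)) n μ / (q - 1) ^ (∑ i ∈ Finset.Icc 1 n, μ i))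
      = fun q : ℝ => ∏ i ∈ Finset.Icc 1 n, ∏ j ∈ Finset.Icc 1 (μ i),
          ((1 - q ^ (-(armF μ i j + 1 : ℤ)) * (q ^ (1/α)) ^ (-(legF n μ i j : ℤ)))/(q - 1))
    from funext heq]
  rw [PaF]
  apply tendsto_finset_prod
  intro i _
  apply tendsto_finset_prod
  intro j _
  have h := fac_tendsto ((armF μ i j : ℝ) + 1 + (legF n μ i j : ℝ)/α)
  refine h.congr' ?_
  filter_upwards [mem_ev] with q hq
  rw [dfac_eq hq.1]

lemma dJ_eq {α : ℝ} (hα : 0 < α) (n : ℕ) (μ : ℕ → ℕ) :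
    dJ α n μ = α ^ (∑ i ∈ Finset.Icc 1 n, μ i) * PaF α n μ := by
  rw [dJ, PaF, ← prod_qsub α n μ, ← Finset.prod_mul_distrib]
  apply Finset.prod_congr rfl
  intro i _
  rw [← Finset.prod_mul_distrib]
  apply Finset.prod_congr rfl
  intro j _
  field_simp

lemma PaF_pos {α : ℝ} (hα : 0 < α) (n : ℕ) (μ : ℕ → ℕ) : 0 < PaF α n μ := by
  apply Finset.prod_pos
  intro i _
  apply Finset.prod_pos
  intro j _
  positivity

lemma LA (n : ℕ) (η : ℕ → ℕ) {I : Finset ℕ} (hI : I ⊆ Finset.Icc 1 n) (hne : I.Nonempty)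
    {α : ℝ} (hα : 0 < α) :
    Filter.Tendsto (fun q : ℝ => AIR q (q ^ (1/α)) I (specR q (q ^ (1/α)) n η)) F
      (nhds (AJ α I (uvec α n η))) := by
  have hminI : fmin I ∈ Finset.Icc 1 n := hI (fmin_mem hne)
  have hmaxI : fmax I ∈ Finset.Icc 1 n := hI (fmax_mem hne)
  have h1 : uvec α n η (fmax I) - 1 ≠ uvec α n η (fmin I) := by
    rcases eq_or_lt_of_le (fmin_le hne (fmax_mem hne)) with h | h
    · rw [← h]; intro hc; linarith
    · have h2 := uvec_add_one_ne (η := η) hα hminI hmaxI h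
      intro hc; exact h2 (by linarith)
  have hT := ahat_tendsto (α := α) (uvec α n η (fmax I) - 1) (uvec α n η (fmin I)) h1
  have hL := list_prod_tendsto ((I.sort (· ≤ ·)).zip (I.sort (· ≤ ·)).tail)
      (fun p q => ahatR (q ^ (1/α)) (q ^ (uvec α n η p.1)) (q ^ (uvec α n η p.2)))
      (fun p => aJ α (uvec α n η p.1) (uvec α n η p.2))
      (fun p hp => by
        obtain ⟨m1, m2, hlt⟩ := zip_pairs (Finset.sortedLT_sort I).pairwise hp
        exact ahat_tendsto _ _
          (uvec_ne hα (hI ((Finset.mem_sort _).mp m1)) (hI ((Finset.mem_sort _).mp m2)) hlt))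
  have h := hT.mul hL
  unfold AJ
  refine h.congr' ?_
  filter_upwards [mem_ev] with q hq
  rw [AIR]
  simp only [spec_eq hq.1]
  rw [show q ^ (uvec α n η (fmax I)) / q = q ^ (uvec α n η (fmax I) - 1) from by
    rw [Real.rpow_sub hq.1, Real.rpow_one]]

lemma LB (n : ℕ) (η : ℕ → ℕ) {I : Finset ℕ} (hI : I ⊆ Finset.Icc 1 n) (hne : I.Nonempty)
    {α : ℝ} (hα : 0 < α) :
    Filter.Tendsto
      (fun q : ℝ => BtildeIR q (q ^ (1/α)) n I (specR q (q ^ (1/α)) n η) / (q - 1)) F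
      (nhds (BtJ α n I (uvec α n η))) := by
  have hminI : fmin I ∈ Finset.Icc 1 n := hI (fmin_mem hne)
  have T1 := lem_M (uvec α n η (fmin I) + 1) ((1/α) * (1 - (n : ℝ)))
  have T2 : Filter.Tendsto
      (fun q : ℝ => ∏ j ∈ (Finset.Icc 1 n).filter (fun j => j ∉ I ∧ j < fmax I),
        bhatR (q ^ (1/α)) (q ^ (uvec α n η (succI I j))) (q ^ (uvec α n η j))) F
      (nhds (∏ j ∈ (Finset.Icc 1 n).filter (fun j => j ∉ I ∧ j < fmax I),
        bJ α (uvec α n η (succI I j)) (uvec α n η j))) := by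
    apply tendsto_finset_prod
    intro j hj
    rw [Finset.mem_filter] at hj
    obtain ⟨hs1, hs2⟩ := succI_spec hne hj.2.2
    exact bhat_tendsto _ _ (Ne.symm (uvec_ne hα hj.1 (hI hs1) hs2))
  have T3 : Filter.Tendsto
      (fun q : ℝ => ∏ j ∈ (Finset.Icc 1 n).filter (fun j => fmax I < j),
        bhatR (q ^ (1/α)) (q ^ (uvec α n η (fmin I) + 1)) (q ^ (uvec α n η j))) F
      (nhds (∏ j ∈ (Finset.Icc 1 n).filter (fun j => fmax I < j),
        bJ α (uvec α n η (fmin I) + 1) (uvec α n η j))) := by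
    apply tendsto_finset_prod
    intro j hj
    rw [Finset.mem_filter] at hj
    have hfj : fmin I < j := lt_of_le_of_lt (fmin_le hne (fmax_mem hne)) hj.2
    exact bhat_tendsto _ _ (uvec_add_one_ne hα hminI hj.1 hfj)
  have h := (T1.mul T2).mul T3
  rw [show uvec α n η (fmin I) + 1 - (1/α) * (1 - (n : ℝ))
      = uvec α n η (fmin I) + 1 + ((n : ℝ) - 1)/α from by field_simp; ring] at h
  unfold BtJ
  refine h.congr' ?_
  filter_upwards [mem_ev] with q hq
  rw [BtildeIR]
  simp only [spec_eq hq.1]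
  simp only [show ∀ u : ℝ, q * q ^ u = q ^ (u + 1) from fun u => by
    rw [Real.rpow_add hq.1, Real.rpow_one, mul_comm]]
  rw [tpow_eq hq.1]
  rw [div_mul_eq_mul_div, div_mul_eq_mul_div]

/-- classical limit of the Pieri coefficients:
with `t = q^{1/α}`, `a_{η,c_I(η)}(q) → -α² d'_{α,η} A_{α,I}(u) B̃_{α,I}(u) / d'_{α,c_I(η)}`
as `q → 1⁻` through `(0,1)`. -/
theorem classical_limit_pieri_coeff (n : ℕ) (hn : 2 ≤ n)
    (η : ℕ → ℕ) (hη : IsComp n η)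
    (I : Finset ℕ) (hI : I ⊆ Finset.Icc 1 n) (hne : I.Nonempty)
    (hmax : MaximalI n I η)
    (α : ℝ) (hα : 0 < α) :
    Filter.Tendsto
      (fun qr : ℝ =>
        -((qr - 1) * dprimeInvR qr (qr ^ (1/α)) n η *
            AIR qr (qr ^ (1/α)) I (specR qr (qr ^ (1/α)) n η) *
            BtildeIR qr (qr ^ (1/α)) n I (specR qr (qr ^ (1/α)) n η)) /
          (qr ^ (η (fmin I) + 1) * (qr ^ (1/α) - 1) *
            dprimeInvR qr (qr ^ (1/α)) n (cIfun I η)))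
      (nhdsWithin 1 (Set.Ioo 0 1))
      (nhds (-(α ^ 2 * dJ α n η * AJ α I (uvec α n η) * BtJ α n I (uvec α n η)) /
        dJ α n (cIfun I η))) := by
  have hsum : ∑ i ∈ Finset.Icc 1 n, cIfun I η i = (∑ i ∈ Finset.Icc 1 n, η i) + 1 :=
    sum_cIfun hne η hI
  have LDη := LD α n η
  have LDc := LD α n (cIfun I η)
  rw [hsum] at LDc
  have LAh := LA n η hI hne hα
  have LBh := LB n η hI hne hα
  have LP : Filter.Tendsto (fun q : ℝ => q ^ (η (fmin I) + 1)) F (nhds 1) := by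
    have h := (continuous_pow (η (fmin I) + 1)).tendsto (1:ℝ)
    rw [one_pow] at h
    exact h.mono_left nhdsWithin_le_nhds
  have LT := base_tendsto (1/α)
  have hPac := PaF_pos hα n (cIfun I η)
  have hden : (1:ℝ) * (1/α) * PaF α n (cIfun I η) ≠ 0 := by
    rw [one_mul]
    exact ne_of_gt (mul_pos (by positivity) hPac)
  have H := Filter.Tendsto.div (((LDη.mul LAh).mul LBh).neg) ((LP.mul LT).mul LDc) hden
  have hval : -(PaF α n η * AJ α I (uvec α n η) * BtJ α n I (uvec α n η)) /
      ((1:ℝ) * (1/α) * PaF α n (cIfun I η))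
      = -(α ^ 2 * dJ α n η * AJ α I (uvec α n η) * BtJ α n I (uvec α n η)) /
        dJ α n (cIfun I η) := by
    rw [dJ_eq hα n η, dJ_eq hα n (cIfun I η), hsum]
    have h1 : PaF α n (cIfun I η) ≠ 0 := hPac.ne'
    have h2 : α ≠ 0 := hα.ne'
    field_simp
    ring
  rw [hval] at H
  refine H.congr' ?_
  filter_upwards [mem_ev] with q hq
  have hx1 : q - 1 ≠ 0 := sub_ne_zero.mpr (ne_of_lt hq.2)
  exact (key_alg (q - 1) (dprimeInvR q (q ^ (1/α)) n η)
    (AIR q (q ^ (1/α)) I (specR q (q ^ (1/α)) n η))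
    (BtildeIR q (q ^ (1/α)) n I (specR q (q ^ (1/α)) n η))
    (q ^ (η (fmin I) + 1)) (q ^ (1/α) - 1)
    (dprimeInvR q (q ^ (1/α)) n (cIfun I η)) hx1 (∑ i ∈ Finset.Icc 1 n, η i)).symm
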